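/- Let 0.5 < f < 1 and q ∈ (0,1), and let X = Bin((1-f)i, q) - Bin(fi, q) be the difference of two independent binomial random variables. Then Pr[X ≥ 0] ≤ exp(-q·i·(√f - √(1-f))²). -/

import Mathlib

open Finset Real

/-- Chernoff-type bound for the difference of two binomials. -/
theorem stmt_0 (f q : ℝ) (hf : 1/2 < f) (hf1 : f < 1) (hq : 0 < q) (hq1 : q < 1)
    (i a b : ℕ) (hi : 0 < i) (ha : (a : ℝ) = f * i) (hb : (b : ℝ) = (1 - f) * i) :
    ∑ l₁ ∈ Finset.range (a + 1), ∑ l₂ ∈ Finset.range (b + 1),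
      (if l₁ ≤ l₂ then
        ((a.choose l₁ : ℝ) * q ^ l₁ * (1 - q) ^ (a - l₁)) *
        ((b.choose l₂ : ℝ) * q ^ l₂ * (1 - q) ^ (b - l₂)) else 0)
      ≤ Real.exp (-(q * i * (Real.sqrt f - Real.sqrt (1 - f)) ^ 2)) := by
  have hf0 : 0 < f := by linarith
  have h1f : 0 < 1 - f := by linarith
  set u := Real.sqrt f with hu
  set v := Real.sqrt (1 - f) with hv
  have hu0 : 0 < u := Real.sqrt_pos.2 hf0
  have hv0 : 0 < v := Real.sqrt_pos.2 h1f
  have hu2 : u ^ 2 = f := Real.sq_sqrt hf0.le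
  have hv2 : v ^ 2 = 1 - f := Real.sq_sqrt h1f.le
  have hvu : v ≤ u := Real.sqrt_le_sqrt (by linarith)
  have h1q : (0:ℝ) ≤ 1 - q := by linarith
  -- Step A: pointwise bound
  have hA : ∀ l₁ ∈ Finset.range (a + 1), ∀ l₂ ∈ Finset.range (b + 1),
      (if l₁ ≤ l₂ then
        ((a.choose l₁ : ℝ) * q ^ l₁ * (1 - q) ^ (a - l₁)) *
        ((b.choose l₂ : ℝ) * q ^ l₂ * (1 - q) ^ (b - l₂)) else 0)
      ≤ ((a.choose l₁ : ℝ) * (q * (v/u)) ^ l₁ * (1 - q) ^ (a - l₁)) *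
        ((b.choose l₂ : ℝ) * (q * (u/v)) ^ l₂ * (1 - q) ^ (b - l₂)) := by
    intro l₁ _ l₂ _
    have hP : (0:ℝ) ≤ (a.choose l₁ : ℝ) * q ^ l₁ * (1 - q) ^ (a - l₁) := by positivity
    have hQ : (0:ℝ) ≤ (b.choose l₂ : ℝ) * q ^ l₂ * (1 - q) ^ (b - l₂) := by positivity
    split_ifs with h
    · have key : (1:ℝ) ≤ (v/u)^l₁ * (u/v)^l₂ := by
        have heq : (v/u)^l₁ * (u/v)^l₂ = (u/v)^(l₂ - l₁) := by
          rw [← Nat.sub_add_cancel h, pow_add, Nat.add_sub_cancel]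
          have hvu1 : (v/u) * (u/v) = 1 := by field_simp
          calc (v/u)^l₁ * ((u/v)^(l₂ - l₁) * (u/v)^l₁)
              = ((v/u) * (u/v))^l₁ * (u/v)^(l₂ - l₁) := by ring
            _ = (u/v)^(l₂ - l₁) := by rw [hvu1, one_pow, one_mul]
        rw [heq]
        exact one_le_pow₀ ((one_le_div hv0).2 hvu)
      calc ((a.choose l₁ : ℝ) * q ^ l₁ * (1 - q) ^ (a - l₁)) *
            ((b.choose l₂ : ℝ) * q ^ l₂ * (1 - q) ^ (b - l₂))
          ≤ (((a.choose l₁ : ℝ) * q ^ l₁ * (1 - q) ^ (a - l₁)) *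
            ((b.choose l₂ : ℝ) * q ^ l₂ * (1 - q) ^ (b - l₂))) * ((v/u)^l₁ * (u/v)^l₂) :=
            le_mul_of_one_le_right (mul_nonneg hP hQ) key
        _ = ((a.choose l₁ : ℝ) * (q * (v/u)) ^ l₁ * (1 - q) ^ (a - l₁)) *
            ((b.choose l₂ : ℝ) * (q * (u/v)) ^ l₂ * (1 - q) ^ (b - l₂)) := by
            rw [mul_pow, mul_pow]; ring
    · positivity
  refine le_trans (Finset.sum_le_sum fun l₁ h₁ => Finset.sum_le_sum fun l₂ h₂ => hA l₁ h₁ l₂ h₂) ?_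
  -- Step B: factor the double sum and use binomial theorem
  have hB : ∑ l₁ ∈ Finset.range (a + 1), ∑ l₂ ∈ Finset.range (b + 1),
      ((a.choose l₁ : ℝ) * (q * (v/u)) ^ l₁ * (1 - q) ^ (a - l₁)) *
        ((b.choose l₂ : ℝ) * (q * (u/v)) ^ l₂ * (1 - q) ^ (b - l₂))
      = (q * (v/u) + (1 - q)) ^ a * (q * (u/v) + (1 - q)) ^ b := by
    rw [add_pow, add_pow, Finset.sum_mul_sum]
    refine Finset.sum_congr rfl fun l₁ _ => Finset.sum_congr rfl fun l₂ _ => ?_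
    ring
  rw [hB]
  -- Step C: 1 + x ≤ exp x
  have hbase1 : (0:ℝ) ≤ q * (v/u) + (1 - q) := by positivity
  have hbase2 : (0:ℝ) ≤ q * (u/v) + (1 - q) := by positivity
  have hc1 : q * (v/u) + (1 - q) ≤ Real.exp (q * (v/u - 1)) := by
    have := Real.add_one_le_exp (q * (v/u - 1))
    linarith
  have hc2 : q * (u/v) + (1 - q) ≤ Real.exp (q * (u/v - 1)) := by
    have := Real.add_one_le_exp (q * (u/v - 1))
    linarith
  calc (q * (v/u) + (1 - q)) ^ a * (q * (u/v) + (1 - q)) ^ b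
      ≤ Real.exp (q * (v/u - 1)) ^ a * Real.exp (q * (u/v - 1)) ^ b := by
        apply mul_le_mul (pow_le_pow_left₀ hbase1 hc1 a) (pow_le_pow_left₀ hbase2 hc2 b)
          (by positivity) (by positivity)
    _ = Real.exp ((a:ℝ) * (q * (v/u - 1)) + (b:ℝ) * (q * (u/v - 1))) := by
        rw [← Real.exp_nat_mul, ← Real.exp_nat_mul, ← Real.exp_add]
    _ = Real.exp (-(q * i * (u - v) ^ 2)) := by
        congr 1
        rw [ha, hb, ← hv2, ← hu2]
        field_simp
        ring
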